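/- First-moment identity for the eigenvalue problem. If U is a decaying eigenfunction with eigenvalue Λ for the parameter V, then Λ·∫₀^∞ x·U(x)dx = −V·∫₀^∞ τ(x)U(x)dx + ∫₀^∞ x·μ(x)U(x)dx. -/

import Mathlib

open MeasureTheory Set Filter Topology

private lemma aux_iUnion_Ioi : (⋃ n : ℕ, Ioi ((1:ℝ)/(n+1))) = Ioi 0 := by
  ext x
  simp only [mem_iUnion, mem_Ioi]
  constructor
  · rintro ⟨n, hn⟩
    exact lt_trans (by positivity) hn
  · intro hx
    exact exists_nat_one_div_lt hx

/-- Integration by parts on `(0,∞)` : if `g = x * f x` has derivative `f x + x * f' x`,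
this derivative is integrable, and `g` tends to `0` at both ends, its integral is `0`. -/
private lemma aux_ibp (f f' : ℝ → ℝ)
    (hderiv : ∀ x > 0, HasDerivAt f (f' x) x)
    (hint : IntegrableOn (fun x => f x + x * f' x) (Ioi 0))
    (hzero : Tendsto f (nhdsWithin 0 (Ioi 0)) (nhds 0))
    (htop : Tendsto (fun x => x * f x) atTop (nhds 0)) :
    ∫ x in Ioi (0:ℝ), (f x + x * f' x) = 0 := by
  have hg : ∀ x > 0, HasDerivAt (fun y => y * f y) (f x + x * f' x) x := by
    intro x hx
    have := (hasDerivAt_id x).mul (hderiv x hx)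
    rw [show (fun y => y * f y) = id * f from rfl]
    simpa [one_mul] using this
  have key : ∀ a : ℝ, 0 < a → ∫ x in Ioi a, (f x + x * f' x) = 0 - a * f a := by
    intro a ha
    exact integral_Ioi_of_hasDerivAt_of_tendsto
      (hg a ha).continuousAt.continuousWithinAt
      (fun x hx => hg x (lt_trans ha hx))
      (hint.mono_set (Ioi_subset_Ioi ha.le)) htop
  have hx0 : Tendsto (fun n : ℕ => (1:ℝ)/(n+1)) atTop (𝓝 0) :=
    tendsto_one_div_add_atTop_nhds_zero_nat
  have hx0' : Tendsto (fun n : ℕ => (1:ℝ)/(n+1)) atTop (nhdsWithin 0 (Ioi 0)) := by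
    refine tendsto_nhdsWithin_of_tendsto_nhds_of_eventually_within _ hx0 ?_
    filter_upwards with n
    have : (0:ℝ) < 1/(n+1) := by positivity
    simpa using this
  have h1 : Tendsto (fun n : ℕ => ∫ x in Ioi ((1:ℝ)/(n+1)), (f x + x * f' x)) atTop
      (𝓝 (∫ x in Ioi (0:ℝ), (f x + x * f' x))) := by
    have hmono : Monotone (fun n : ℕ => Ioi ((1:ℝ)/(n+1))) := by
      intro m n hmn
      apply Ioi_subset_Ioi
      apply one_div_le_one_div_of_le (by positivity)
      exact_mod_cast Nat.succ_le_succ hmn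
    have := tendsto_setIntegral_of_monotone (s := fun n : ℕ => Ioi ((1:ℝ)/(n+1)))
      (fun _ => measurableSet_Ioi) hmono (by rw [aux_iUnion_Ioi]; exact hint)
    rwa [aux_iUnion_Ioi] at this
  have h2 : Tendsto (fun n : ℕ => ∫ x in Ioi ((1:ℝ)/(n+1)), (f x + x * f' x)) atTop (𝓝 0) := by
    have hf0 : Tendsto (fun n : ℕ => f ((1:ℝ)/(n+1))) atTop (𝓝 0) := hzero.comp hx0'
    have : Tendsto (fun n : ℕ => (0:ℝ) - (1/(n+1)) * f (1/(n+1))) atTop (𝓝 0) := by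
      have := hx0.mul hf0
      simpa using (tendsto_const_nhds (x := (0:ℝ)) (f := atTop)).sub this
    refine this.congr fun n => ?_
    exact (key _ (by positivity)).symm
  exact tendsto_nhds_unique h1 h2

/-- Fubini on the region `{0 < x < y}`. -/
private lemma aux_fubini (G : ℝ × ℝ → ℝ)
    (hG : IntegrableOn G {p : ℝ × ℝ | 0 < p.1 ∧ p.1 < p.2}) :
    IntegrableOn (fun x => ∫ y in Ioi x, G (x, y)) (Ioi 0) ∧
    (∫ x in Ioi (0:ℝ), ∫ y in Ioi x, G (x, y))
      = ∫ y in Ioi (0:ℝ), ∫ x in Ioo 0 y, G (x, y) := by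
  set A : Set (ℝ × ℝ) := {p : ℝ × ℝ | 0 < p.1 ∧ p.1 < p.2} with hA_def
  have hA : MeasurableSet A :=
    (measurableSet_lt measurable_const measurable_fst).inter
      (measurableSet_lt measurable_fst measurable_snd)
  have hGi : Integrable (A.indicator G) := (integrable_indicator_iff hA).2 hG
  have hGi' : Integrable (A.indicator G) ((volume : Measure ℝ).prod volume) := by
    rwa [← MeasureTheory.Measure.volume_eq_prod] 
  have hx_inner : ∀ x : ℝ, (∫ y, A.indicator G (x, y))
      = (Ioi (0:ℝ)).indicator (fun x => ∫ y in Ioi x, G (x, y)) x := by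
    intro x
    rcases lt_or_ge 0 x with hx | hx
    · rw [indicator_of_mem (mem_Ioi.2 hx), ← integral_indicator measurableSet_Ioi]
      congr 1
      funext y
      by_cases hy : x < y <;>
        simp [indicator_apply, hA_def, mem_setOf_eq, hx, hy]
    · rw [indicator_of_notMem (by simpa using hx)]
      have h0 : ∀ y : ℝ, A.indicator G (x, y) = 0 := fun y =>
        indicator_of_notMem (fun h => absurd h.1 (not_lt.2 hx)) _
      simp only [h0, integral_zero]
  have hy_inner : ∀ y : ℝ, (∫ x, A.indicator G (x, y)) = ∫ x in Ioo 0 y, G (x, y) := by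
    intro y
    rw [← integral_indicator measurableSet_Ioo]
    have hfun : (fun x => A.indicator G (x, y))
        = fun x => (Ioo 0 y).indicator (fun x => G (x, y)) x := by
      funext x
      by_cases h1 : 0 < x <;> by_cases h2 : x < y <;>
        simp [indicator_apply, hA_def, mem_setOf_eq, mem_Ioo, h1, h2]
    rw [hfun]
  have hmarg : Integrable (fun x => ∫ y, A.indicator G (x, y)) (volume : Measure ℝ) := by
    have := hGi'.integral_prod_left
    exact this
  constructor
  · have : Integrable ((Ioi (0:ℝ)).indicator (fun x => ∫ y in Ioi x, G (x, y))) := by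
      refine hmarg.congr (ae_of_all _ fun x => hx_inner x)
    exact (integrable_indicator_iff measurableSet_Ioi).1 this
  · have e1 : (∫ x in Ioi (0:ℝ), ∫ y in Ioi x, G (x, y))
        = ∫ x, ∫ y, A.indicator G (x, y) := by
      rw [← integral_indicator measurableSet_Ioi]
      congr 1
      funext x
      exact (hx_inner x).symm
    have e2 : (∫ x, ∫ y, A.indicator G (x, y)) = ∫ y, ∫ x, A.indicator G (x, y) :=
      integral_integral_swap (f := fun x y => A.indicator G (x, y)) hGi'
    have e3 : (∫ y, ∫ x, A.indicator G (x, y))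
        = ∫ y in Ioi (0:ℝ), ∫ x in Ioo 0 y, G (x, y) := by
      rw [← integral_indicator measurableSet_Ioi]
      congr 1
      funext y
      rw [hy_inner y]
      rcases lt_or_ge 0 y with hy | hy
      · rw [indicator_of_mem (mem_Ioi.2 hy)]
      · rw [indicator_of_notMem (by simpa using hy), Ioo_eq_empty (not_lt.2 hy)]
        · simp
    rw [e1, e2, e3]


/-- A *decaying eigenfunction* `U` (with `U'` the pointwise derivative of `τ U`) with
eigenvalue `Λ` for the parameter `V` of the prion growth-fragmentation operator:
`U ≥ 0`, `τ U` is differentiable on `(0,∞)` with derivative `U'`, the eigenvalue equation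
`V (τU)'(x) + (μ(x)+β(x)) U(x) − 2 ∫ₓ^∞ β(y) κ(x,y) U(y) dy = Λ U(x)` holds for `x > 0`,
the functions `U, xU, τU, μU, xμU, βU, xβU, (τU)'` are integrable on `(0,∞)`,
`β(y)κ(x,y)U(y)` and `x β(y)κ(x,y)U(y)` are integrable on `{0 < x < y}`, and
`τU → 0` at `0⁺`, `τU → 0` and `x τU → 0` at `∞`. -/
structure DecayingEigenfunction (V Lam : ℝ) (tau mu beta : ℝ → ℝ)
    (kappa : ℝ → ℝ → ℝ) (U U' : ℝ → ℝ) : Prop where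
  nonneg : ∀ x > 0, 0 ≤ U x
  hasDeriv : ∀ x > 0, HasDerivAt (fun y => tau y * U y) (U' x) x
  eigen : ∀ x > 0,
    V * U' x + (mu x + beta x) * U x - 2 * ∫ y in Ioi x, beta y * kappa x y * U y
      = Lam * U x
  int_U : IntegrableOn U (Ioi 0)
  int_xU : IntegrableOn (fun x => x * U x) (Ioi 0)
  int_tauU : IntegrableOn (fun x => tau x * U x) (Ioi 0)
  int_muU : IntegrableOn (fun x => mu x * U x) (Ioi 0)
  int_xmuU : IntegrableOn (fun x => x * mu x * U x) (Ioi 0)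
  int_betaU : IntegrableOn (fun x => beta x * U x) (Ioi 0)
  int_xbetaU : IntegrableOn (fun x => x * beta x * U x) (Ioi 0)
  int_U' : IntegrableOn U' (Ioi 0)
  int_frag : IntegrableOn (fun p : ℝ × ℝ => beta p.2 * kappa p.1 p.2 * U p.2)
      {p : ℝ × ℝ | 0 < p.1 ∧ p.1 < p.2}
  int_xfrag : IntegrableOn (fun p : ℝ × ℝ => p.1 * (beta p.2 * kappa p.1 p.2 * U p.2))
      {p : ℝ × ℝ | 0 < p.1 ∧ p.1 < p.2}
  lim_zero : Tendsto (fun x => tau x * U x) (nhdsWithin 0 (Ioi 0)) (nhds 0)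
  lim_top : Tendsto (fun x => tau x * U x) atTop (nhds 0)
  lim_xtop : Tendsto (fun x => x * (tau x * U x)) atTop (nhds 0)

/-- **First-moment identity for the eigenvalue problem**: integrating the eigenvalue
equation against `x` over `(0,∞)` gives
`Λ ∫ x U = −V ∫ τ U + ∫ x μ U`. -/
theorem first_moment_identity
    (V Lam : ℝ) (tau mu beta : ℝ → ℝ) (kappa : ℝ → ℝ → ℝ) (U U' : ℝ → ℝ)
    (htau_nn : ∀ x > 0, 0 ≤ tau x) (hmu_nn : ∀ x > 0, 0 ≤ mu x)
    (hbeta_nn : ∀ x > 0, 0 ≤ beta x)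
    (hkap_nn : ∀ x y : ℝ, 0 ≤ kappa x y)
    (hkap_supp : ∀ x y : ℝ, y ≤ x → kappa x y = 0)
    (hkap_mass : ∀ y > 0, ∫ x in (0:ℝ)..y, kappa x y = 1)
    (hkap_mom : ∀ y > 0, ∫ x in (0:ℝ)..y, x * kappa x y = y / 2)
    (hU : DecayingEigenfunction V Lam tau mu beta kappa U U') :
    Lam * ∫ x in Ioi (0:ℝ), x * U x
      = -V * (∫ x in Ioi (0:ℝ), tau x * U x) + ∫ x in Ioi (0:ℝ), x * mu x * U x := by
  classical
  set J : ℝ → ℝ := fun x => ∫ y in Ioi x, beta y * kappa x y * U y with hJ_def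
  set G : ℝ × ℝ → ℝ := fun p => p.1 * (beta p.2 * kappa p.1 p.2 * U p.2) with hG_def
  obtain ⟨hJint0, hfub⟩ := aux_fubini G hU.int_xfrag
  -- the inner integral is x * J x
  have hJeq : (fun x => ∫ y in Ioi x, G (x, y)) = fun x => x * J x := by
    funext x
    simp only [hG_def, hJ_def]
    exact integral_const_mul x _
  have hJint : IntegrableOn (fun x => x * J x) (Ioi 0) := by
    rw [← hJeq]; exact hJint0
  -- compute the swapped integral
  have hfrag : (∫ x in Ioi (0:ℝ), x * J x)
      = ∫ y in Ioi (0:ℝ), beta y * U y * (y / 2) := by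
    rw [← hJeq, hfub]
    refine setIntegral_congr_fun measurableSet_Ioi fun y hy => ?_
    have hy' : (0:ℝ) < y := hy
    have h1 : (∫ x in Ioo (0:ℝ) y, G (x, y))
        = (beta y * U y) * ∫ x in Ioo (0:ℝ) y, x * kappa x y := by
      rw [← integral_const_mul]
      refine setIntegral_congr_fun measurableSet_Ioo fun x _ => ?_
      simp only [hG_def]; ring
    rw [h1]
    have h2 : (∫ x in Ioo (0:ℝ) y, x * kappa x y) = y / 2 := by
      rw [← integral_Ioc_eq_integral_Ioo, ← intervalIntegral.integral_of_le hy'.le]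
      exact hkap_mom y hy'
    rw [h2]
  -- hence 2 ∫ x J x = ∫ x β U
  have hfrag2 : 2 * (∫ x in Ioi (0:ℝ), x * J x) = ∫ x in Ioi (0:ℝ), x * beta x * U x := by
    rw [hfrag, ← integral_const_mul]
    refine setIntegral_congr_fun measurableSet_Ioi fun y _ => ?_
    ring
  -- integrability of x * U' in the case V ≠ 0, and of V * (x * U') always
  have hVxU' : IntegrableOn (fun x => V * (x * U' x)) (Ioi 0) ∧
      (∫ x in Ioi (0:ℝ), V * (x * U' x)) = -V * ∫ x in Ioi (0:ℝ), tau x * U x := by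
    by_cases hV : V = 0
    · constructor
      · simp only [hV, zero_mul]
        exact integrable_zero _ _ _
      · simp [hV]
    · have hxU' : IntegrableOn (fun x => x * U' x) (Ioi 0) := by
        have hcomb : IntegrableOn (fun x =>
            (1/V) * (Lam * (x * U x) - x * mu x * U x - x * beta x * U x + 2 * (x * J x)))
            (Ioi 0) :=
          ((((hU.int_xU.const_mul Lam).sub hU.int_xmuU).sub hU.int_xbetaU).add
            (hJint.const_mul 2)).const_mul (1/V)
        refine hcomb.congr_fun (fun x hx => ?_) measurableSet_Ioi
        have h := hU.eigen x hx
        simp only [hJ_def]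
        field_simp
        linear_combination (-x) * h
      constructor
      · exact hxU'.const_mul V
      · rw [integral_const_mul]
        have hibp := aux_ibp (fun x => tau x * U x) U' hU.hasDeriv
          (hU.int_tauU.add hxU') hU.lim_zero hU.lim_xtop
        rw [integral_add hU.int_tauU hxU'] at hibp
        have hxx : (∫ x in Ioi (0:ℝ), x * U' x) = -∫ x in Ioi (0:ℝ), tau x * U x := by
          linarith
        rw [hxx]; ring
  obtain ⟨hi1, he1⟩ := hVxU'
  -- pointwise identity on (0, ∞)
  have hpt : ∀ x ∈ Ioi (0:ℝ), Lam * (x * U x)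
      = V * (x * U' x) + (x * mu x * U x + x * beta x * U x) - 2 * (x * J x) := by
    intro x hx
    have h := hU.eigen x hx
    simp only [hJ_def]
    linear_combination (-x) * h
  -- integrate
  have hint : (∫ x in Ioi (0:ℝ), Lam * (x * U x))
      = (∫ x in Ioi (0:ℝ), (V * (x * U' x) + (x * mu x * U x + x * beta x * U x)
          - 2 * (x * J x))) :=
    setIntegral_congr_fun measurableSet_Ioi hpt
  rw [integral_const_mul] at hint
  have hsum : IntegrableOn (fun x => x * mu x * U x + x * beta x * U x) (Ioi 0) := by
    exact hU.int_xmuU.add hU.int_xbetaU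
  have hadd : IntegrableOn
      (fun x => V * (x * U' x) + (x * mu x * U x + x * beta x * U x)) (Ioi 0) := by
    exact hi1.add hsum
  have h2J : IntegrableOn (fun x => 2 * (x * J x)) (Ioi 0) := by
    exact hJint.const_mul 2
  rw [integral_sub hadd h2J, integral_add hi1 hsum,
    integral_add hU.int_xmuU hU.int_xbetaU, he1, integral_const_mul, hfrag2] at hint
  linarith [hint]
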